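/- For the alphabet model on ℤ_N, the Kolmogorov cycle condition holds for all cycles in the configuration space if and only if div γ(i) = 0 for all i, where γ(i,j) = log(c(i,j)/c(j,i)). -/

import Mathlib

private lemma ediv_add_one {n δ : ℤ} (hn : 0 < n) (h : ¬ n ∣ (δ + 1)) :
    (δ + 1) / n = δ / n := by
  have hr0 : 0 ≤ δ % n := Int.emod_nonneg δ (by omega)
  have hrn : δ % n < n := Int.emod_lt_of_pos δ hn
  have hd : δ = n * (δ / n) + δ % n := (Int.mul_ediv_add_emod δ n).symm
  have hcomm : (δ / n) * n = n * (δ / n) := mul_comm _ _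
  rcases lt_or_eq_of_le (by omega : δ % n + 1 ≤ n) with hlt | heq
  · have h1 : δ + 1 = (δ % n + 1) + (δ / n) * n := by omega
    rw [h1, Int.add_mul_ediv_right _ _ (by omega : n ≠ 0),
      Int.ediv_eq_zero_of_lt (by omega) hlt, zero_add]
  · exact absurd ⟨δ / n + 1, by rw [mul_add]; omega⟩ h

private lemma ediv_sub_one {n δ : ℤ} (hn : 0 < n) (h : ¬ n ∣ δ) :
    (δ - 1) / n = δ / n := by
  have hr0 : 0 ≤ δ % n := Int.emod_nonneg δ (by omega)
  have hrn : δ % n < n := Int.emod_lt_of_pos δ hn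
  have hd : δ = n * (δ / n) + δ % n := (Int.mul_ediv_add_emod δ n).symm
  have hcomm : (δ / n) * n = n * (δ / n) := mul_comm _ _
  have hne : δ % n ≠ 0 := fun h0 => h (Int.dvd_of_emod_eq_zero h0)
  have h1 : δ - 1 = (δ % n - 1) + (δ / n) * n := by omega
  rw [h1, Int.add_mul_ediv_right _ _ (by omega : n ≠ 0),
    Int.ediv_eq_zero_of_lt (by omega) (by omega), zero_add]

private lemma ediv_add_two {n δ : ℤ} (hn : 1 < n) (h : n ∣ (δ + 1)) :
    (δ + 2) / n = δ / n + 1 := by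
  obtain ⟨k, hk⟩ := h
  have e1 : (k - 1) * n = n * k - n := by ring
  have e2 : k * n = n * k := mul_comm _ _
  have h1 : δ + 2 = 1 + k * n := by omega
  have h2 : δ = (n - 1) + (k - 1) * n := by omega
  rw [h1, Int.add_mul_ediv_right _ _ (by omega : n ≠ 0),
    Int.ediv_eq_zero_of_lt (by omega) (by omega), h2,
    Int.add_mul_ediv_right _ _ (by omega : n ≠ 0),
    Int.ediv_eq_zero_of_lt (by omega) (by omega)]
  omega

private lemma ediv_sub_two {n δ : ℤ} (hn : 1 < n) (h : n ∣ (δ - 1)) :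
    (δ - 2) / n = δ / n - 1 := by
  obtain ⟨k, hk⟩ := h
  have e1 : (k - 1) * n = n * k - n := by ring
  have e2 : k * n = n * k := mul_comm _ _
  have h1 : δ - 2 = (n - 1) + (k - 1) * n := by omega
  have h2 : δ = 1 + k * n := by omega
  rw [h1, Int.add_mul_ediv_right _ _ (by omega : n ≠ 0),
    Int.ediv_eq_zero_of_lt (by omega) (by omega), h2,
    Int.add_mul_ediv_right _ _ (by omega : n ≠ 0),
    Int.ediv_eq_zero_of_lt (by omega) (by omega)]
  omega

private lemma ediv_add_mul {n δ k : ℤ} (hn : 0 < n) :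
    (δ + n * k) / n = δ / n + k :=
  Int.add_mul_ediv_left δ k (by omega : n ≠ 0)



private lemma zmod_add_one_ne {N : ℕ} (hN2 : 2 ≤ N) (u : ZMod N) : u + 1 ≠ u := by
  intro h
  have h1 : (1 : ZMod N) = 0 := by
    have := congrArg (fun t => t - u) h
    simpa [add_sub_cancel_left] using this
  rw [show (1 : ZMod N) = ((1 : ℕ) : ZMod N) by push_cast; rfl] at h1
  have hd := (ZMod.natCast_eq_zero_iff 1 N).mp h1
  have := Nat.le_of_dvd one_pos hd
  omega



private def liftP (N L : ℕ) (η : Fin (L + 1) → (ZMod N ≃ Fin N)) (x : Fin L → ZMod N) :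
    ℕ → Fin N → ℤ
  | 0 => fun i => (((η 0).symm i).val : ℤ)
  | (l + 1) => fun i =>
    if h : l < L then
      if i = η (Fin.castSucc ⟨l, h⟩) (x ⟨l, h⟩) then liftP N L η x l i + 1
      else if i = η (Fin.castSucc ⟨l, h⟩) (x ⟨l, h⟩ + 1) then liftP N L η x l i - 1
      else liftP N L η x l i
    else liftP N L η x l i

private lemma liftP_cast (N L : ℕ) [NeZero N]
    (η : Fin (L + 1) → (ZMod N ≃ Fin N)) (x : Fin L → ZMod N)
    (hstep : ∀ l : Fin L,
      η l.succ = (Equiv.swap (x l) (x l + 1)).trans (η l.castSucc)) :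
    ∀ l, ∀ hl : l ≤ L, ∀ i, ((liftP N L η x l i : ZMod N)) = (η ⟨l, by omega⟩).symm i := by
  intro l
  induction l with
  | zero =>
    intro _ i
    simp only [liftP, Int.cast_natCast]
    exact ZMod.natCast_rightInverse _
  | succ l ih =>
    intro hl i
    have h : l < L := by omega
    have ihl := ih (by omega)
    have hs := hstep ⟨l, h⟩
    have hsite : (η ⟨l + 1, by omega⟩).symm i
        = Equiv.swap (x ⟨l, h⟩) (x ⟨l, h⟩ + 1) ((η (Fin.castSucc ⟨l, h⟩)).symm i) := by
      have : (⟨l + 1, by omega⟩ : Fin (L + 1)) = (⟨l, h⟩ : Fin L).succ := rfl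
      rw [this, hs]
      simp [Equiv.symm_trans_apply]
    have hcs : (Fin.castSucc (⟨l, h⟩ : Fin L)) = (⟨l, by omega⟩ : Fin (L + 1)) := rfl
    simp only [liftP, dif_pos h]
    by_cases ha : i = η (Fin.castSucc ⟨l, h⟩) (x ⟨l, h⟩)
    · rw [if_pos ha]
      have h1 : (η (Fin.castSucc ⟨l, h⟩)).symm i = x ⟨l, h⟩ := by
        rw [ha]; exact Equiv.symm_apply_apply _ _
      rw [hsite, h1, Equiv.swap_apply_left]
      push_cast
      rw [hcs] at h1
      rw [ihl i, h1]
    · rw [if_neg ha]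
      by_cases hb : i = η (Fin.castSucc ⟨l, h⟩) (x ⟨l, h⟩ + 1)
      · rw [if_pos hb]
        have h1 : (η (Fin.castSucc ⟨l, h⟩)).symm i = x ⟨l, h⟩ + 1 := by
          rw [hb]; exact Equiv.symm_apply_apply _ _
        rw [hsite, h1, Equiv.swap_apply_right]
        push_cast
        rw [hcs] at h1
        rw [ihl i, h1]
        ring
      · rw [if_neg hb]
        have h1 : (η (Fin.castSucc ⟨l, h⟩)).symm i ≠ x ⟨l, h⟩ := by
          intro hcon; exact ha (by rw [← hcon, Equiv.apply_symm_apply])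
        have h2 : (η (Fin.castSucc ⟨l, h⟩)).symm i ≠ x ⟨l, h⟩ + 1 := by
          intro hcon; exact hb (by rw [← hcon, Equiv.apply_symm_apply])
        rw [hsite, Equiv.swap_apply_of_ne_of_ne h1 h2, ihl i, hcs]

private lemma liftP_ndvd (N L : ℕ) [NeZero N]
    (η : Fin (L + 1) → (ZMod N ≃ Fin N)) (x : Fin L → ZMod N)
    (hstep : ∀ l : Fin L,
      η l.succ = (Equiv.swap (x l) (x l + 1)).trans (η l.castSucc))
    {l : ℕ} (hl : l ≤ L) {i j : Fin N} (hij : i ≠ j) :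
    ¬ (N : ℤ) ∣ (liftP N L η x l i - liftP N L η x l j) := by
  intro hdvd
  have hz : ((liftP N L η x l i - liftP N L η x l j : ℤ) : ZMod N) = 0 :=
    (ZMod.intCast_zmod_eq_zero_iff_dvd _ _).mpr hdvd
  push_cast at hz
  rw [liftP_cast N L η x hstep l hl i, liftP_cast N L η x hstep l hl j] at hz
  have : (η ⟨l, by omega⟩).symm i = (η ⟨l, by omega⟩).symm j := by
    have := sub_eq_zero.mp hz; exact this
  exact hij ((η ⟨l, by omega⟩).symm.injective this)



private lemma liftP_step (N L : ℕ) [NeZero N] (hN2 : 2 ≤ N)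
    (η : Fin (L + 1) → (ZMod N ≃ Fin N)) (x : Fin L → ZMod N)
    (hstep : ∀ l : Fin L,
      η l.succ = (Equiv.swap (x l) (x l + 1)).trans (η l.castSucc))
    {l : ℕ} (h : l < L) {i j : Fin N} (hij : i ≠ j) :
    (liftP N L η x (l + 1) i - liftP N L η x (l + 1) j) / (N : ℤ)
      = (liftP N L η x l i - liftP N L η x l j) / (N : ℤ)
        + (if i = η (Fin.castSucc ⟨l, h⟩) (x ⟨l, h⟩)
              ∧ j = η (Fin.castSucc ⟨l, h⟩) (x ⟨l, h⟩ + 1) then 1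
           else if i = η (Fin.castSucc ⟨l, h⟩) (x ⟨l, h⟩ + 1)
              ∧ j = η (Fin.castSucc ⟨l, h⟩) (x ⟨l, h⟩) then -1 else 0) := by
  have hn0 : (0 : ℤ) < (N : ℤ) := by exact_mod_cast (by omega : 0 < N)
  have hn1 : (1 : ℤ) < (N : ℤ) := by exact_mod_cast hN2
  set a := η (Fin.castSucc ⟨l, h⟩) (x ⟨l, h⟩) with ha_def
  set b := η (Fin.castSucc ⟨l, h⟩) (x ⟨l, h⟩ + 1) with hb_def
  have hab : a ≠ b := by
    intro hcon
    have := (η (Fin.castSucc ⟨l, h⟩)).injective hcon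
    exact zmod_add_one_ne hN2 (x ⟨l, h⟩) this.symm
  have hcs : (Fin.castSucc (⟨l, h⟩ : Fin L)) = (⟨l, by omega⟩ : Fin (L + 1)) := rfl
  have hsa : ((liftP N L η x l a : ZMod N)) = x ⟨l, h⟩ := by
    rw [liftP_cast N L η x hstep l (by omega) a, ← hcs, ha_def, Equiv.symm_apply_apply]
  have hsb : ((liftP N L η x l b : ZMod N)) = x ⟨l, h⟩ + 1 := by
    rw [liftP_cast N L η x hstep l (by omega) b, ← hcs, hb_def, Equiv.symm_apply_apply]
  have hdvd_ab : (N : ℤ) ∣ (liftP N L η x l a - liftP N L η x l b + 1) := by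
    rw [← ZMod.intCast_zmod_eq_zero_iff_dvd]
    push_cast
    rw [hsa, hsb]
    ring
  have hP1 : liftP N L η x (l + 1) i
      = if i = a then liftP N L η x l i + 1
        else if i = b then liftP N L η x l i - 1 else liftP N L η x l i := by
    simp only [liftP, dif_pos h, ← ha_def, ← hb_def]
  have hP2 : liftP N L η x (l + 1) j
      = if j = a then liftP N L η x l j + 1
        else if j = b then liftP N L η x l j - 1 else liftP N L η x l j := by
    simp only [liftP, dif_pos h, ← ha_def, ← hb_def]
  have hndvd := liftP_ndvd N L η x hstep (le_of_lt h) hij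
  have hndvd' := liftP_ndvd N L η x hstep (by omega : l + 1 ≤ L) hij
  rw [hP1, hP2] at hndvd'
  by_cases hia : i = a
  · have hib : i ≠ b := by rw [hia]; exact hab
    by_cases hjb : j = b
    · have hja : j ≠ a := by rw [hjb]; exact hab.symm
      rw [hP1, hP2, if_pos hia, if_neg hja, if_pos hjb, if_pos ⟨hia, hjb⟩]
      have e : liftP N L η x l i + 1 - (liftP N L η x l j - 1)
          = (liftP N L η x l i - liftP N L η x l j) + 2 := by ring
      rw [e]
      refine ediv_add_two hn1 ?_
      rw [hia, hjb]
      exact hdvd_ab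
    · have hja : j ≠ a := by rw [hia] at hij; exact fun hc => hij hc.symm
      rw [hP1, hP2, if_pos hia, if_neg hja, if_neg hjb,
        if_neg (fun hc => hjb hc.2), if_neg (fun hc => hib hc.1)]
      rw [if_pos hia, if_neg hja, if_neg hjb] at hndvd'
      have e : liftP N L η x l i + 1 - liftP N L η x l j
          = (liftP N L η x l i - liftP N L η x l j) + 1 := by ring
      rw [e] at hndvd' ⊢
      rw [ediv_add_one hn0 hndvd', add_zero]
  · by_cases hib : i = b
    · by_cases hja : j = a
      · rw [hP1, hP2, if_neg hia, if_pos hib, if_pos hja,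
          if_neg (fun hc => hia hc.1), if_pos ⟨hib, hja⟩]
        have e : liftP N L η x l i - 1 - (liftP N L η x l j + 1)
            = (liftP N L η x l i - liftP N L η x l j) - 2 := by ring
        rw [e]
        have hd : (N : ℤ) ∣ (liftP N L η x l i - liftP N L η x l j - 1) := by
          rw [hib, hja]
          have hneg := dvd_neg.mpr hdvd_ab
          rw [show liftP N L η x l b - liftP N L η x l a - 1
              = -(liftP N L η x l a - liftP N L η x l b + 1) by ring]
          exact hneg
        rw [ediv_sub_two hn1 hd]
        ring
      · have hjb : j ≠ b := by rw [hib] at hij; exact fun hc => hij hc.symm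
        rw [hP1, hP2, if_neg hia, if_pos hib, if_neg hja, if_neg hjb,
          if_neg (fun hc => hia hc.1), if_neg (fun hc => hja hc.2)]
        have e : liftP N L η x l i - 1 - liftP N L η x l j
            = (liftP N L η x l i - liftP N L η x l j) - 1 := by ring
        rw [e, ediv_sub_one hn0 hndvd, add_zero]
    · by_cases hja : j = a
      · rw [hP1, hP2, if_neg hia, if_neg hib, if_pos hja,
          if_neg (fun hc => hia hc.1), if_neg (fun hc => hib hc.1)]
        have e : liftP N L η x l i - (liftP N L η x l j + 1)
            = (liftP N L η x l i - liftP N L η x l j) - 1 := by ring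
        rw [e, ediv_sub_one hn0 hndvd, add_zero]
      · by_cases hjb : j = b
        · rw [hP1, hP2, if_neg hia, if_neg hib, if_neg hja, if_pos hjb,
            if_neg (fun hc => hia hc.1), if_neg (fun hc => hib hc.1)]
          rw [if_neg hia, if_neg hib, if_neg hja, if_pos hjb] at hndvd'
          have e : liftP N L η x l i - (liftP N L η x l j - 1)
              = (liftP N L η x l i - liftP N L η x l j) + 1 := by ring
          rw [e] at hndvd' ⊢
          rw [ediv_add_one hn0 hndvd', add_zero]
        · rw [hP1, hP2, if_neg hia, if_neg hib, if_neg hja, if_neg hjb,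
            if_neg (fun hc => hia hc.1), if_neg (fun hc => hib hc.1), add_zero]



private lemma sum_erase_comm {α : Type*} [Fintype α] [DecidableEq α] (F : α → α → ℝ) :
    ∑ i, ∑ j ∈ Finset.univ.erase i, F i j = ∑ j, ∑ i ∈ Finset.univ.erase j, F i j := by
  have h1 : ∀ (G : α → α → ℝ) (i : α), ∑ j ∈ Finset.univ.erase i, G i j
      = ∑ j, if j = i then 0 else G i j := by
    intro G i
    rw [← Finset.sum_erase (f := fun j => if j = i then (0:ℝ) else G i j) (a := i) Finset.univ (by simp)]
    exact Finset.sum_congr rfl fun j hj => by rw [if_neg (Finset.mem_erase.mp hj).1]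
  calc ∑ i, ∑ j ∈ Finset.univ.erase i, F i j
      = ∑ i, ∑ j, if j = i then 0 else F i j := by
        exact Finset.sum_congr rfl fun i _ => h1 F i
    _ = ∑ j, ∑ i, if i = j then 0 else F i j := by
        rw [Finset.sum_comm]
        refine Finset.sum_congr rfl fun j _ => Finset.sum_congr rfl fun i _ => ?_
        by_cases hij : i = j
        · rw [if_pos hij.symm, if_pos hij]
        · rw [if_neg (fun hc => hij hc.symm), if_neg hij]
    _ = ∑ j, ∑ i ∈ Finset.univ.erase j, F i j := by
        exact Finset.sum_congr rfl fun j _ => (h1 (fun a b => F b a) j).symm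



private lemma cycle_sum_eq_zero (N : ℕ) [NeZero N] (hN2 : 2 ≤ N)
    (g : Fin N → Fin N → ℝ) (hanti : ∀ i j, g j i = - g i j)
    (hdiv : ∀ i, ∑ j ∈ Finset.univ.erase i, g i j = 0)
    (L : ℕ) (η : Fin (L + 1) → (ZMod N ≃ Fin N)) (x : Fin L → ZMod N)
    (hstep : ∀ l : Fin L,
      η l.succ = (Equiv.swap (x l) (x l + 1)).trans (η l.castSucc))
    (hclosed : η (Fin.last L) = η 0) :
    ∑ l : Fin L, g (η l.castSucc (x l)) (η l.castSucc (x l + 1)) = 0 := by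
  have hn0 : (0 : ℤ) < (N : ℤ) := by exact_mod_cast (by omega : 0 < N)
  set Φ : ℕ → ℝ := fun l => ∑ i, ∑ j ∈ Finset.univ.erase i,
    (((liftP N L η x l i - liftP N L η x l j) / (N : ℤ) : ℤ) : ℝ) * g i j with hΦ
  -- step formula
  have hΦstep : ∀ l : Fin L,
      Φ (l.val + 1) = Φ l.val + 2 * g (η l.castSucc (x l)) (η l.castSucc (x l + 1)) := by
    intro l
    have hl : l.val < L := l.isLt
    set a := η l.castSucc (x l) with ha_def
    set b := η l.castSucc (x l + 1) with hb_def
    have hab : a ≠ b := by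
      intro hcon
      exact zmod_add_one_ne hN2 (x l) ((η l.castSucc).injective hcon).symm
    have heta : (⟨l.val, hl⟩ : Fin L) = l := Fin.eta l hl
    have key : ∀ i : Fin N, ∀ j ∈ Finset.univ.erase i,
        (((liftP N L η x (l.val + 1) i - liftP N L η x (l.val + 1) j) / (N : ℤ) : ℤ) : ℝ) * g i j
        = (((liftP N L η x l.val i - liftP N L η x l.val j) / (N : ℤ) : ℤ) : ℝ) * g i j
          + ((if i = a ∧ j = b then g i j else 0) - (if i = b ∧ j = a then g i j else 0)) := by
      intro i j hj
      have hij : i ≠ j := fun hc => (Finset.mem_erase.mp hj).1 hc.symm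
      rw [liftP_step N L hN2 η x hstep hl hij]
      rw [heta, ← ha_def, ← hb_def]
      push_cast
      split_ifs <;> try ring
      all_goals exact absurd ((‹i = a ∧ j = b›).1.symm.trans (‹i = b ∧ j = a›).1) hab
    calc Φ (l.val + 1)
        = ∑ i, ∑ j ∈ Finset.univ.erase i,
            ((((liftP N L η x l.val i - liftP N L η x l.val j) / (N : ℤ) : ℤ) : ℝ) * g i j
            + ((if i = a ∧ j = b then g i j else 0) - (if i = b ∧ j = a then g i j else 0))) := by
          exact Finset.sum_congr rfl fun i _ => Finset.sum_congr rfl fun j hj => key i j hj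
      _ = Φ l.val + (∑ i, ∑ j ∈ Finset.univ.erase i, (if i = a ∧ j = b then g i j else 0)
            - ∑ i, ∑ j ∈ Finset.univ.erase i, (if i = b ∧ j = a then g i j else 0)) := by
          simp only [Finset.sum_add_distrib, Finset.sum_sub_distrib, hΦ]
      _ = Φ l.val + 2 * g a b := by
          have e1 : ∑ i, ∑ j ∈ Finset.univ.erase i, (if i = a ∧ j = b then g i j else 0)
              = g a b := by
            rw [Finset.sum_eq_single a]
            · have : ∀ j ∈ Finset.univ.erase a, (if a = a ∧ j = b then g a j else 0)
                  = if j = b then g a j else 0 := by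
                intro j _; simp
              rw [Finset.sum_congr rfl this, Finset.sum_ite_eq' (Finset.univ.erase a) b (g a),
                if_pos (Finset.mem_erase.mpr ⟨hab.symm, Finset.mem_univ b⟩)]
            · intro i _ hia
              exact Finset.sum_eq_zero fun j _ => by rw [if_neg (fun hc => hia hc.1)]
            · intro hcon; exact absurd (Finset.mem_univ a) hcon
          have e2 : ∑ i, ∑ j ∈ Finset.univ.erase i, (if i = b ∧ j = a then g i j else 0)
              = g b a := by
            rw [Finset.sum_eq_single b]
            · have : ∀ j ∈ Finset.univ.erase b, (if b = b ∧ j = a then g b j else 0)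
                  = if j = a then g b j else 0 := by
                intro j _; simp
              rw [Finset.sum_congr rfl this, Finset.sum_ite_eq' (Finset.univ.erase b) a (g b),
                if_pos (Finset.mem_erase.mpr ⟨hab, Finset.mem_univ a⟩)]
            · intro i _ hib
              exact Finset.sum_eq_zero fun j _ => by rw [if_neg (fun hc => hib hc.1)]
            · intro hcon; exact absurd (Finset.mem_univ b) hcon
          rw [e1, e2, hanti a b]
          ring
  -- telescoping
  have htel : ∑ l ∈ Finset.range L, (Φ (l + 1) - Φ l) = Φ L - Φ 0 := Finset.sum_range_sub Φ L
  have hsum2 : 2 * (∑ l : Fin L, g (η l.castSucc (x l)) (η l.castSucc (x l + 1))) = Φ L - Φ 0 := by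
    rw [← htel, Finset.mul_sum, ← Fin.sum_univ_eq_sum_range (fun l => Φ (l + 1) - Φ l) L]
    exact Finset.sum_congr rfl fun l _ => by rw [hΦstep l]; ring
  -- closedness: Φ L = Φ 0
  have hdvdw : ∀ i, (N : ℤ) ∣ (liftP N L η x L i - liftP N L η x 0 i) := by
    intro i
    rw [← ZMod.intCast_zmod_eq_zero_iff_dvd]
    push_cast
    rw [liftP_cast N L η x hstep L (le_refl L) i, liftP_cast N L η x hstep 0 (by omega) i]
    have h1 : (⟨L, by omega⟩ : Fin (L + 1)) = Fin.last L := rfl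
    have h2 : (⟨0, by omega⟩ : Fin (L + 1)) = 0 := rfl
    rw [h1, h2, hclosed]
    ring
  set w : Fin N → ℤ := fun i => (liftP N L η x L i - liftP N L η x 0 i) / (N : ℤ) with hw_def
  have hw : ∀ i, liftP N L η x L i = liftP N L η x 0 i + (N : ℤ) * w i := by
    intro i
    have := Int.ediv_mul_cancel (hdvdw i)
    rw [hw_def]
    simp only []
    rw [mul_comm]
    omega
  have hquot : ∀ i j, (liftP N L η x L i - liftP N L η x L j) / (N : ℤ)
      = (liftP N L η x 0 i - liftP N L η x 0 j) / (N : ℤ) + (w i - w j) := by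
    intro i j
    rw [hw i, hw j]
    have e : liftP N L η x 0 i + (N:ℤ) * w i - (liftP N L η x 0 j + (N:ℤ) * w j)
        = (liftP N L η x 0 i - liftP N L η x 0 j) + (N:ℤ) * (w i - w j) := by ring
    rw [e, ediv_add_mul hn0]
  have hΦL : Φ L = Φ 0 := by
    have expand : Φ L = Φ 0 + ∑ i, ∑ j ∈ Finset.univ.erase i,
        (((w i : ℝ) - (w j : ℝ)) * g i j) := by
      calc Φ L = ∑ i, ∑ j ∈ Finset.univ.erase i,
          ((((liftP N L η x 0 i - liftP N L η x 0 j) / (N : ℤ) : ℤ) : ℝ) * g i j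
            + ((w i : ℝ) - (w j : ℝ)) * g i j) := by
            refine Finset.sum_congr rfl fun i _ => Finset.sum_congr rfl fun j _ => ?_
            rw [hquot i j]
            push_cast
            ring
        _ = Φ 0 + ∑ i, ∑ j ∈ Finset.univ.erase i, (((w i : ℝ) - (w j : ℝ)) * g i j) := by
            simp only [Finset.sum_add_distrib, hΦ]
    have hS1 : ∑ i, ∑ j ∈ Finset.univ.erase i, ((w i : ℝ) * g i j) = 0 := by
      refine Finset.sum_eq_zero fun i _ => ?_
      rw [← Finset.mul_sum, hdiv i, mul_zero]
    have hS2 : ∑ i, ∑ j ∈ Finset.univ.erase i, ((w j : ℝ) * g i j) = 0 := by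
      rw [sum_erase_comm (fun i j => (w j : ℝ) * g i j)]
      refine Finset.sum_eq_zero fun j _ => ?_
      have : ∑ i ∈ Finset.univ.erase j, g i j = 0 := by
        have : ∑ i ∈ Finset.univ.erase j, g i j = - ∑ i ∈ Finset.univ.erase j, g j i := by
          rw [← Finset.sum_neg_distrib]
          exact Finset.sum_congr rfl fun i _ => by rw [hanti]
        rw [this, hdiv j, neg_zero]
      rw [← Finset.mul_sum, this, mul_zero]
    have : ∑ i, ∑ j ∈ Finset.univ.erase i, (((w i : ℝ) - (w j : ℝ)) * g i j) = 0 := by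
      have e : ∀ i : Fin N, ∀ j ∈ Finset.univ.erase i,
          ((w i : ℝ) - (w j : ℝ)) * g i j = (w i : ℝ) * g i j - (w j : ℝ) * g i j := by
        intro i j _; ring
      calc ∑ i, ∑ j ∈ Finset.univ.erase i, (((w i : ℝ) - (w j : ℝ)) * g i j)
          = ∑ i, ∑ j ∈ Finset.univ.erase i,
              ((w i : ℝ) * g i j - (w j : ℝ) * g i j) := by
            exact Finset.sum_congr rfl fun i _ => Finset.sum_congr rfl fun j hj => e i j hj
        _ = 0 := by
            simp only [Finset.sum_sub_distrib]
            rw [hS1, hS2, sub_zero]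
    rw [expand, this, add_zero]
  rw [hΦL, sub_self] at hsum2
  linarith



private def pathP (N : ℕ) (η₀ : ZMod N ≃ Fin N) : ℕ → (ZMod N ≃ Fin N)
  | 0 => η₀
  | (l + 1) => (Equiv.swap ((l : ZMod N)) ((l : ZMod N) + 1)).trans (pathP N η₀ l)

private def posF (N m r v : ℕ) : ℕ :=
  if v = r then 0 else 1 + ((if v < r then v else v - 1) + m) % (N - 1)

private lemma pathP_eq (N : ℕ) [NeZero N] (hN2 : 2 ≤ N) (η₀ : ZMod N ≃ Fin N) :
    ∀ l (z : ZMod N), pathP N η₀ l z = η₀ ((posF N (l / N) (l % N) z.val : ℕ) : ZMod N) := by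
  intro l
  induction l with
  | zero =>
    intro z
    have hv : z.val < N := ZMod.val_lt z
    have hp : posF N 0 0 z.val = z.val := by
      by_cases h0 : z.val = 0
      · simp [posF, h0]
      · simp only [posF, if_neg h0, if_neg (by omega : ¬ z.val < 0)]
        rw [Nat.mod_eq_of_lt (by omega)]
        omega
    rw [show (0 : ℕ) / N = 0 by simp, show (0 : ℕ) % N = 0 by simp, hp]
    simp only [pathP]
    congr 1
    exact (ZMod.natCast_rightInverse z).symm
  | succ l ih =>
    intro z
    have hN0 : 0 < N := by omega
    set u : ZMod N := (l : ZMod N) with hu_def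
    have hswap : pathP N η₀ (l + 1) z = pathP N η₀ l (Equiv.swap u (u + 1) z) :=
      Equiv.trans_apply _ _ _
    set r := l % N with hr_def
    set m := l / N with hm_def
    have hr : r < N := Nat.mod_lt l hN0
    have hl_eq : N * m + r = l := Nat.div_add_mod l N
    have hu : u.val = r := ZMod.val_natCast N l
    have hu1 : (u + 1).val = (l + 1) % N := by
      have : u + 1 = ((l + 1 : ℕ) : ZMod N) := by push_cast; ring
      rw [this, ZMod.val_natCast]
    have hv : z.val < N := ZMod.val_lt z
    have hinj : ∀ z1 z2 : ZMod N, z1.val = z2.val → z1 = z2 :=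
      fun z1 z2 h => ZMod.val_injective N h
    rcases Nat.lt_or_ge (r + 1) N with hA | hB
    · -- case A : no wrap
      have hA1 : (l + 1) % N = r + 1 := by
        have h1 : l + 1 = (r + 1) + N * m := by omega
        rw [h1, Nat.add_mul_mod_self_left, Nat.mod_eq_of_lt hA]
      have hA2 : (l + 1) / N = m := by
        have h1 : l + 1 = (r + 1) + N * m := by omega
        rw [h1, Nat.add_mul_div_left _ _ hN0, Nat.div_eq_of_lt hA]
        omega
      rw [hswap, hA1, hA2]
      by_cases hz : z = u
      · rw [hz, Equiv.swap_apply_left, ih (u + 1)]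
        congr 2
        rw [hu1, hA1, hu]
        simp only [posF, if_neg (by omega : ¬ r + 1 = r), if_neg (by omega : ¬ r + 1 < r),
          if_neg (by omega : ¬ r = r + 1), if_pos (by omega : r < r + 1)]
        have e1 : r + 1 - 1 + m = r + m := by omega
        rw [e1]
      · by_cases hz1 : z = u + 1
        · rw [hz1, Equiv.swap_apply_right, ih u]
          congr 2
          rw [hu, hu1, hA1]
          simp [posF]
        · rw [Equiv.swap_apply_of_ne_of_ne hz hz1, ih z]
          congr 2
          have hvr : z.val ≠ r := fun h => hz (hinj z u (by rw [h, hu]))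
          have hvr1 : z.val ≠ r + 1 := fun h => hz1 (hinj z (u + 1) (by rw [h, hu1, hA1]))
          simp only [posF, if_neg hvr, if_neg hvr1]
          by_cases hlt : z.val < r
          · rw [if_pos hlt, if_pos (by omega : z.val < r + 1)]
          · rw [if_neg hlt, if_neg (by omega : ¬ z.val < r + 1)]
    · -- case B : wrap, r = N - 1
      have hrN : r = N - 1 := by omega
      have hmul : N * (m + 1) = N * m + N := by ring
      have hB1 : (l + 1) % N = 0 := by
        have h1 : l + 1 = N * (m + 1) := by omega
        rw [h1, Nat.mul_mod_right]
      have hB2 : (l + 1) / N = m + 1 := by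
        have h1 : l + 1 = N * (m + 1) := by omega
        rw [h1, Nat.mul_div_cancel_left _ hN0]
      rw [hswap, hB1, hB2]
      by_cases hz : z = u
      · rw [hz, Equiv.swap_apply_left, ih (u + 1)]
        congr 2
        rw [hu1, hB1, hu]
        simp only [posF, if_neg (by omega : ¬ (0:ℕ) = r), if_pos (by omega : (0:ℕ) < r),
          if_neg (by omega : ¬ r = 0), if_neg (by omega : ¬ r < 0)]
        have e1 : r - 1 + (m + 1) = (N - 1) + m := by omega
        rw [e1, Nat.add_mod_left, Nat.zero_add]
      · by_cases hz1 : z = u + 1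
        · rw [hz1, Equiv.swap_apply_right, ih u]
          congr 2
          rw [hu, hu1, hB1]
          simp [posF]
        · rw [Equiv.swap_apply_of_ne_of_ne hz hz1, ih z]
          congr 2
          have hvr : z.val ≠ r := fun h => hz (hinj z u (by rw [h, hu]))
          have hv0 : z.val ≠ 0 := fun h => hz1 (hinj z (u + 1) (by rw [h, hu1, hB1]))
          simp only [posF, if_neg hvr, if_neg hv0,
            if_pos (by omega : z.val < r), if_neg (by omega : ¬ z.val < 0)]
          have e1 : z.val - 1 + (m + 1) = z.val + m := by omega
          rw [e1]



private lemma sum_range_mul (f : ℕ → ℝ) (a : ℕ) :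
    ∀ b : ℕ, ∑ l ∈ Finset.range (b * a), f l
      = ∑ m ∈ Finset.range b, ∑ r ∈ Finset.range a, f (m * a + r) := by
  intro b
  induction b with
  | zero => simp
  | succ b ih =>
    have h1 : (b + 1) * a = b * a + a := by ring
    rw [h1, Finset.range_add, Finset.sum_union (Finset.disjoint_range_addLeftEmbedding _ _),
      ih, Finset.sum_map, Finset.sum_range_succ]
    simp [addLeftEmbedding_apply]

private lemma sum_mod_shift (M : ℕ) (hM : 0 < M) (r : ℕ) (h : ℕ → ℝ) :
    ∑ m ∈ Finset.range M, h ((r + m) % M) = ∑ t ∈ Finset.range M, h t := by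
  set s := r % M with hs_def
  have hsM : s < M := Nat.mod_lt r hM
  refine Finset.sum_nbij' (fun m => (r + m) % M) (fun t => (t + M - s) % M)
    (fun m _ => Finset.mem_range.mpr (Nat.mod_lt _ hM))
    (fun t _ => Finset.mem_range.mpr (Nat.mod_lt _ hM)) ?_ ?_ (fun m _ => rfl)
  · intro m hm
    have hmM : m < M := Finset.mem_range.mp hm
    show ((r + m) % M + M - s) % M = m
    have e1 : (r + m) % M = (s + m) % M := by
      conv_lhs => rw [Nat.add_mod, ← hs_def, Nat.mod_eq_of_lt hmM]
    rcases Nat.lt_or_ge (s + m) M with hc | hc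
    · rw [e1, Nat.mod_eq_of_lt hc]
      have e2 : s + m + M - s = m + M := by omega
      rw [e2, Nat.add_mod_right, Nat.mod_eq_of_lt hmM]
    · have e3 : (s + m) % M = s + m - M := by
        rw [Nat.mod_eq_sub_mod hc, Nat.mod_eq_of_lt (by omega)]
      rw [e1, e3]
      have e4 : s + m - M + M - s = m := by omega
      rw [e4, Nat.mod_eq_of_lt hmM]
  · intro t ht
    have htM : t < M := Finset.mem_range.mp ht
    show (r + (t + M - s) % M) % M = t
    have e1 : ∀ q, (r + q) % M = (s + q % M) % M := by
      intro q
      conv_lhs => rw [Nat.add_mod, ← hs_def]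
    rcases Nat.lt_or_ge t s with hc | hc
    · have e2 : (t + M - s) % M = t + M - s := Nat.mod_eq_of_lt (by omega)
      rw [e2, e1, Nat.mod_eq_of_lt (by omega : t + M - s < M),
        show s + (t + M - s) = t + M by omega, Nat.add_mod_right, Nat.mod_eq_of_lt htM]
    · have e2 : (t + M - s) % M = t - s := by
        rw [show t + M - s = (t - s) + M by omega, Nat.add_mod_right,
          Nat.mod_eq_of_lt (by omega)]
      rw [e2, e1, Nat.mod_eq_of_lt (by omega : t - s < M),
        show s + (t - s) = t by omega, Nat.mod_eq_of_lt htM]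



private lemma pathP_closed (N : ℕ) [NeZero N] (hN2 : 2 ≤ N) (η₀ : ZMod N ≃ Fin N) :
    pathP N η₀ (N * (N - 1)) = η₀ := by
  have hN0 : 0 < N := by omega
  apply Equiv.ext
  intro z
  rw [pathP_eq N hN2 η₀ _ z, Nat.mul_mod_right, Nat.mul_div_cancel_left _ hN0]
  have hv : z.val < N := ZMod.val_lt z
  have hp : posF N (N - 1) 0 z.val = z.val := by
    by_cases h0 : z.val = 0
    · simp [posF, h0]
    · simp only [posF, if_neg h0, if_neg (by omega : ¬ z.val < 0)]
      rw [show z.val - 1 + (N - 1) = (N - 1) + (z.val - 1) by omega, Nat.add_mod_left,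
        Nat.mod_eq_of_lt (by omega)]
      omega
  rw [hp]
  exact congrArg η₀ (ZMod.natCast_rightInverse z)

private lemma pathP_first (N : ℕ) [NeZero N] (hN2 : 2 ≤ N) (η₀ : ZMod N ≃ Fin N) (l : ℕ) :
    pathP N η₀ l ((l : ZMod N)) = η₀ 0 := by
  rw [pathP_eq N hN2 η₀ l _, ZMod.val_natCast]
  simp [posF]

private lemma pathP_second (N : ℕ) [NeZero N] (hN2 : 2 ≤ N) (η₀ : ZMod N ≃ Fin N) (l : ℕ) :
    pathP N η₀ l ((l : ZMod N) + 1)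
      = η₀ (((1 + ((l % N + l / N) % (N - 1)) : ℕ) : ZMod N)) := by
  have hN0 : 0 < N := by omega
  have h1 : ((l : ZMod N) + 1) = ((l + 1 : ℕ) : ZMod N) := by push_cast; ring
  rw [h1, pathP_eq N hN2 η₀ l _, ZMod.val_natCast]
  set r := l % N with hr_def
  set m := l / N with hm_def
  have hr : r < N := Nat.mod_lt l hN0
  have hl_eq : N * m + r = l := Nat.div_add_mod l N
  congr 2
  rcases Nat.lt_or_ge (r + 1) N with hA | hB
  · have hA1 : (l + 1) % N = r + 1 := by
      rw [show l + 1 = (r + 1) + N * m by omega, Nat.add_mul_mod_self_left,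
        Nat.mod_eq_of_lt hA]
    rw [hA1]
    simp only [posF, if_neg (by omega : ¬ r + 1 = r), if_neg (by omega : ¬ r + 1 < r)]
    rw [show r + 1 - 1 = r by omega]
  · have hrN : r = N - 1 := by omega
    have hmul : N * (m + 1) = N * m + N := by ring
    have hB1 : (l + 1) % N = 0 := by
      rw [show l + 1 = N * (m + 1) by omega, Nat.mul_mod_right]
    rw [hB1]
    simp only [posF, if_neg (by omega : ¬ (0:ℕ) = r), if_pos (by omega : (0:ℕ) < r)]
    congr 1
    rw [show r + m = (N - 1) + m by omega, Nat.add_mod_left, Nat.zero_add]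

private lemma forward_sum (N : ℕ) [NeZero N] (hN2 : 2 ≤ N) (η₀ : ZMod N ≃ Fin N)
    (g : Fin N → Fin N → ℝ) :
    ∑ l : Fin (N * (N - 1)), g (pathP N η₀ l.val ((l.val : ZMod N)))
        (pathP N η₀ l.val ((l.val : ZMod N) + 1))
      = (N : ℝ) * ∑ j ∈ Finset.univ.erase (η₀ 0), g (η₀ 0) j := by
  have hN0 : 0 < N := by omega
  have hM : 0 < N - 1 := by omega
  set A := η₀ 0 with hA_def
  have hterm : ∀ l : ℕ, g (pathP N η₀ l ((l : ZMod N))) (pathP N η₀ l ((l : ZMod N) + 1))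
      = g A (η₀ (((1 + ((l % N + l / N) % (N - 1)) : ℕ) : ZMod N))) := by
    intro l
    rw [pathP_first N hN2 η₀ l, pathP_second N hN2 η₀ l]
  calc ∑ l : Fin (N * (N - 1)), g (pathP N η₀ l.val ((l.val : ZMod N)))
        (pathP N η₀ l.val ((l.val : ZMod N) + 1))
      = ∑ l ∈ Finset.range (N * (N - 1)),
          g A (η₀ (((1 + ((l % N + l / N) % (N - 1)) : ℕ) : ZMod N))) := by
        rw [← Fin.sum_univ_eq_sum_range (fun l =>
          g A (η₀ (((1 + ((l % N + l / N) % (N - 1)) : ℕ) : ZMod N)))) (N * (N - 1))]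
        exact Finset.sum_congr rfl fun l _ => hterm l.val
    _ = ∑ m ∈ Finset.range (N - 1), ∑ r ∈ Finset.range N,
          g A (η₀ (((1 + ((r + m) % (N - 1)) : ℕ) : ZMod N))) := by
        rw [show N * (N - 1) = (N - 1) * N by ring,
          sum_range_mul (fun l => g A (η₀ (((1 + ((l % N + l / N) % (N - 1)) : ℕ) : ZMod N)))) N (N - 1)]
        refine Finset.sum_congr rfl fun m hm => Finset.sum_congr rfl fun r hr => ?_
        have hrN : r < N := Finset.mem_range.mp hr
        have e1 : (m * N + r) % N = r := by
          rw [show m * N + r = N * m + r by ring, Nat.mul_add_mod, Nat.mod_eq_of_lt hrN]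
        have e2 : (m * N + r) / N = m := by
          rw [show m * N + r = N * m + r by ring, Nat.mul_add_div hN0,
            Nat.div_eq_of_lt hrN, Nat.add_zero]
        rw [e1, e2, Nat.add_comm r m]
    _ = ∑ r ∈ Finset.range N, ∑ m ∈ Finset.range (N - 1),
          g A (η₀ (((1 + ((r + m) % (N - 1)) : ℕ) : ZMod N))) := Finset.sum_comm
    _ = ∑ r ∈ Finset.range N, ∑ t ∈ Finset.range (N - 1),
          g A (η₀ (((1 + t : ℕ) : ZMod N))) := by
        refine Finset.sum_congr rfl fun r _ => ?_
        exact sum_mod_shift (N - 1) hM r (fun t => g A (η₀ (((1 + t : ℕ) : ZMod N))))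
    _ = (N : ℝ) * ∑ t ∈ Finset.range (N - 1), g A (η₀ (((1 + t : ℕ) : ZMod N))) := by
        rw [Finset.sum_const, Finset.card_range, nsmul_eq_mul]
    _ = (N : ℝ) * ∑ j ∈ Finset.univ.erase A, g A j := by
        congr 1
        refine Finset.sum_nbij' (fun t => η₀ (((1 + t : ℕ) : ZMod N)))
          (fun j => (η₀.symm j).val - 1) ?_ ?_ ?_ ?_ (fun t _ => rfl)
        · intro t ht
          have htM : t < N - 1 := Finset.mem_range.mp ht
          refine Finset.mem_erase.mpr ⟨?_, Finset.mem_univ _⟩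
          intro hcon
          rw [hA_def] at hcon
          have := η₀.injective hcon
          have hval := congrArg ZMod.val this
          rw [ZMod.val_natCast, ZMod.val_zero, Nat.mod_eq_of_lt (by omega)] at hval
          omega
        · intro j hj
          have hjA : j ≠ A := (Finset.mem_erase.mp hj).1
          have hz0 : η₀.symm j ≠ 0 := by
            intro hcon
            exact hjA (by rw [hA_def, ← hcon, Equiv.apply_symm_apply])
          have hv0 : (η₀.symm j).val ≠ 0 := fun hcon => hz0 (ZMod.val_eq_zero _ |>.mp hcon)
          have hvN : (η₀.symm j).val < N := ZMod.val_lt _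
          refine Finset.mem_range.mpr ?_
          show (η₀.symm j).val - 1 < N - 1
          omega
        · intro t ht
          have htM : t < N - 1 := Finset.mem_range.mp ht
          show (η₀.symm (η₀ (((1 + t : ℕ) : ZMod N)))).val - 1 = t
          rw [Equiv.symm_apply_apply, ZMod.val_natCast, Nat.mod_eq_of_lt (by omega)]
          omega
        · intro j hj
          have hjA : j ≠ A := (Finset.mem_erase.mp hj).1
          have hz0 : η₀.symm j ≠ 0 := by
            intro hcon
            exact hjA (by rw [hA_def, ← hcon, Equiv.apply_symm_apply])
          have hv0 : (η₀.symm j).val ≠ 0 := fun hcon => hz0 (ZMod.val_eq_zero _ |>.mp hcon)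
          show η₀ (((1 + ((η₀.symm j).val - 1) : ℕ) : ZMod N)) = j
          rw [show 1 + ((η₀.symm j).val - 1) = (η₀.symm j).val by omega]
          rw [ZMod.natCast_rightInverse (η₀.symm j), Equiv.apply_symm_apply]

/-- the Kolmogorov cycle condition holds for all cycles in the
configuration space of the alphabet model on `ℤ_N` iff `div γ = 0`, where
`γ(i,j) = log (c i j / c j i)`. -/
theorem stmt_14 (N : ℕ) (hN : 0 < N)
    (c : Fin N → Fin N → ℝ) (hc : ∀ i j, 0 < c i j) :
    (∀ (L : ℕ) (η : Fin (L + 1) → (ZMod N ≃ Fin N)) (x : Fin L → ZMod N),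
      (∀ l : Fin L,
        η l.succ = (Equiv.swap (x l) (x l + 1)).trans (η l.castSucc)) →
      η (Fin.last L) = η 0 →
      ∑ l : Fin L,
        Real.log (c (η l.castSucc (x l)) (η l.castSucc (x l + 1)) /
          c (η l.castSucc (x l + 1)) (η l.castSucc (x l))) = 0) ↔
    (∀ i, ∑ j ∈ Finset.univ.erase i, Real.log (c i j / c j i) = 0) := by
  have hlog : ∀ i j, Real.log (c i j / c j i) = Real.log (c i j) - Real.log (c j i) :=
    fun i j => Real.log_div (ne_of_gt (hc i j)) (ne_of_gt (hc j i))
  rcases Nat.lt_or_ge N 2 with h1 | hN2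
  · -- trivial case N = 1
    have hN1 : N = 1 := by omega
    subst hN1
    constructor
    · intro _ i
      have he : Finset.univ.erase i = (∅ : Finset (Fin 1)) := by
        apply Finset.eq_empty_of_forall_notMem
        intro j hj
        exact (Finset.mem_erase.mp hj).1 (Subsingleton.elim j i)
      rw [he, Finset.sum_empty]
    · intro _ L η x _ _
      apply Finset.sum_eq_zero
      intro l _
      have hz : x l + 1 = x l := Subsingleton.elim _ _
      rw [hz, div_self (ne_of_gt (hc _ _)), Real.log_one]
  · have : NeZero N := ⟨by omega⟩
    set g : Fin N → Fin N → ℝ := fun i j => Real.log (c i j) - Real.log (c j i) with hg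
    have hanti : ∀ i j, g j i = - g i j := by
      intro i j
      simp only [hg]
      ring
    constructor
    · -- cycle condition ⟹ zero divergence
      intro hcycle i0
      -- a configuration placing particle i0 at site 0
      let can : ZMod N ≃ Fin N :=
        { toFun := fun z => ⟨z.val, ZMod.val_lt z⟩
          invFun := fun k => ((k.val : ℕ) : ZMod N)
          left_inv := fun z => ZMod.natCast_rightInverse z
          right_inv := fun k => Fin.ext (by
            simp only [ZMod.val_natCast]
            exact Nat.mod_eq_of_lt k.isLt) }
      set η₀ : ZMod N ≃ Fin N := can.trans (Equiv.swap (can 0) i0) with hη₀def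
      have hη₀ : η₀ 0 = i0 := by
        simp only [hη₀def, Equiv.trans_apply]
        exact Equiv.swap_apply_left _ _
      set L := N * (N - 1) with hL
      have key := hcycle L (fun l => pathP N η₀ l.val) (fun l => ((l.val : ℕ) : ZMod N))
        (by
          intro l
          show pathP N η₀ (l.val + 1)
            = (Equiv.swap ((l.val : ZMod N)) ((l.val : ZMod N) + 1)).trans (pathP N η₀ l.val)
          rfl)
        (by
          show pathP N η₀ (Fin.last L).val = pathP N η₀ (0 : Fin (L + 1)).val
          have h1 : (Fin.last L).val = L := rfl
          have h2 : ((0 : Fin (L + 1)).val) = 0 := rfl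
          rw [h1, h2, hL]
          exact pathP_closed N hN2 η₀)
      have key2 : ∑ l : Fin L, g (pathP N η₀ l.val ((l.val : ZMod N)))
          (pathP N η₀ l.val ((l.val : ZMod N) + 1)) = 0 := by
        rw [← key]
        exact Finset.sum_congr rfl fun l _ => (hlog _ _).symm
      rw [forward_sum N hN2 η₀ g, hη₀] at key2
      have hNne : (N : ℝ) ≠ 0 := by
        exact_mod_cast (by omega : N ≠ 0)
      have hfin : ∑ j ∈ Finset.univ.erase i0, g i0 j = 0 :=
        by
          rcases mul_eq_zero.mp key2 with h | h
          · exact absurd h hNne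
          · exact h
      rw [← hfin]
      exact Finset.sum_congr rfl fun j _ => hlog i0 j
    · -- zero divergence ⟹ cycle condition
      intro hdiv L η x hstep hclosed
      have hdiv' : ∀ i, ∑ j ∈ Finset.univ.erase i, g i j = 0 := by
        intro i
        rw [← hdiv i]
        exact Finset.sum_congr rfl fun j _ => (hlog i j).symm
      have := cycle_sum_eq_zero N hN2 g hanti hdiv' L η x hstep hclosed
      rw [← this]
      exact Finset.sum_congr rfl fun l _ => hlog _ _
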